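/- Fix τ ∈ [-1, 1), s ∈ [1/2, 2], and for ε > 0 set S(ε) := Σ_{n∈ℤ} ε · e^{2nε}/(e^{2nε} - 2τ s^{-1} e^{nε} + s^{-2})^2. Then as ε → 0^+, S(ε) converges to the finite integral I(τ, s) := ∫_0^∞ r/(r^2 - 2τ s^{-1} r + s^{-2})^2 dr. -/

import Mathlib

open MeasureTheory Filter

open Set Real

section Aux

variable (τ s : ℝ)

/-- abbreviation for the quadratic -/
noncomputable def stmtQ (r : ℝ) : ℝ := r ^ 2 - 2 * τ * s⁻¹ * r + (s⁻¹) ^ 2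

/-- the substituted integrand -/
noncomputable def stmtG (x : ℝ) : ℝ := Real.exp x * Real.exp x / (stmtQ τ s (Real.exp x)) ^ 2

end Aux

theorem quad_lower (τ s : ℝ) (hτ1 : -1 ≤ τ) (hτ2 : τ < 1) (hs1 : (1/2:ℝ) ≤ s) (hs2 : s ≤ 2)
    {r : ℝ} (hr : 0 ≤ r) :
    min (1 - τ) 1 / 4 * (1 + r ^ 2) ≤ stmtQ τ s r := by
  have hs0 : 0 < s := lt_of_lt_of_le (by norm_num) hs1
  have hsi : s⁻¹ ≥ 1/2 := by
    rw [ge_iff_le, le_inv_comm₀] <;> nlinarith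
  have hsq : (s⁻¹)^2 ≥ 1/4 := by nlinarith
  unfold stmtQ
  rcases le_or_gt τ 0 with h | h
  · have hmin : min (1 - τ) 1 = 1 := min_eq_right (by linarith)
    rw [hmin]
    nlinarith [mul_nonneg (mul_nonneg (neg_nonneg.mpr h) (le_of_lt (inv_pos.mpr hs0))) hr]
  · have hmin : min (1 - τ) 1 = 1 - τ := min_eq_left (by linarith)
    rw [hmin]
    nlinarith [sq_nonneg (r - s⁻¹), mul_nonneg h.le (sq_nonneg (r - s⁻¹))]

theorem g_cont (τ s : ℝ) (hq : ∀ x : ℝ, 0 < stmtQ τ s (Real.exp x)) :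
    Continuous (stmtG τ s) := by
  have hQ : Continuous (fun x : ℝ => stmtQ τ s (Real.exp x)) := by
    unfold stmtQ; fun_prop
  apply Continuous.div (by fun_prop) (by fun_prop)
  intro x
  exact pow_ne_zero 2 (hq x).ne'

theorem g_nonneg (τ s : ℝ) (x : ℝ) : 0 ≤ stmtG τ s x := by
  unfold stmtG; positivity

theorem g_bound (τ s : ℝ) (hτ1 : -1 ≤ τ) (hτ2 : τ < 1) (hs1 : (1/2:ℝ) ≤ s) (hs2 : s ≤ 2)
    (x : ℝ) :
    stmtG τ s x ≤ (min (1 - τ) 1 / 4)⁻¹ ^ 2 * Real.exp (-(2 * |x|)) := by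
  set c : ℝ := min (1 - τ) 1 / 4 with hc
  have hc0 : 0 < c := by
    have : 0 < min (1 - τ) 1 := lt_min (by linarith) one_pos
    exact div_pos this (by norm_num)
  set u : ℝ := Real.exp x with hu
  have hu0 : 0 < u := Real.exp_pos x
  have hq : c * (1 + u ^ 2) ≤ stmtQ τ s u :=
    quad_lower τ s hτ1 hτ2 hs1 hs2 hu0.le
  have hqpos : 0 < c * (1 + u ^ 2) := by positivity
  have h1 : stmtG τ s x ≤ u * u / (c * (1 + u ^ 2)) ^ 2 := by
    unfold stmtG
    rw [← hu]
    apply div_le_div_of_nonneg_left (by positivity) (by positivity)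
    exact pow_le_pow_left₀ hqpos.le hq 2
  have h2 : u * u / (c * (1 + u ^ 2)) ^ 2 = c⁻¹ ^ 2 * (u ^ 2 / (1 + u ^ 2) ^ 2) := by
    field_simp
  rw [h2] at h1
  refine h1.trans (mul_le_mul_of_nonneg_left ?_ (by positivity))
  rcases le_or_gt 0 x with hx | hx
  · rw [abs_of_nonneg hx]
    have : Real.exp (-(2 * x)) = (u ^ 2)⁻¹ := by
      have h3 : Real.exp x ^ 2 = Real.exp (2 * x) := by
        rw [← Real.exp_nat_mul]; norm_num
      rw [hu, h3, ← Real.exp_neg]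
    rw [this, div_le_iff₀ (by positivity), inv_mul_eq_div, le_div_iff₀ (by positivity)]
    nlinarith [sq_nonneg u]
  · rw [abs_of_neg hx]
    have : Real.exp (-(2 * -x)) = u ^ 2 := by
      rw [show -(2 * -x) = x + x by ring, Real.exp_add, ← hu, sq]
    rw [this]
    apply div_le_self (by positivity)
    nlinarith [sq_nonneg u]

theorem exp_abs_bound (x : ℝ) : Real.exp (-(2 * |x|)) ≤ 1 / (1 + x ^ 2) := by
  have h1 : |x| + 1 ≤ Real.exp |x| := Real.add_one_le_exp |x|
  have h2 : 1 + x ^ 2 ≤ Real.exp |x| ^ 2 := by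
    nlinarith [abs_nonneg x, sq_abs x]
  have h3 : Real.exp |x| ^ 2 = Real.exp (2 * |x|) := by
    rw [← Real.exp_nat_mul]; norm_num
  rw [Real.exp_neg, ← h3, one_div]
  exact inv_anti₀ (by positivity) h2

theorem integral_subst (τ s : ℝ) :
    (∫ r in Set.Ioi (0:ℝ), r / (r ^ 2 - 2 * τ * s⁻¹ * r + (s⁻¹) ^ 2) ^ 2)
      = ∫ x, stmtG τ s x := by
  have h := integral_image_eq_integral_abs_deriv_smul MeasurableSet.univ
    (f' := Real.exp)
    (fun x _ => (Real.hasDerivAt_exp x).hasDerivWithinAt)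
    (Real.exp_injective.injOn)
    (fun r => r / (stmtQ τ s r) ^ 2)
  rw [Set.image_univ, Real.range_exp, Measure.restrict_univ] at h
  have h2 : (∫ r in Set.Ioi (0:ℝ), r / (r ^ 2 - 2 * τ * s⁻¹ * r + (s⁻¹) ^ 2) ^ 2)
      = ∫ r in Set.Ioi (0:ℝ), r / (stmtQ τ s r) ^ 2 := by
    unfold stmtQ; rfl
  rw [h2, h]
  congr 1; funext x
  rw [smul_eq_mul, abs_of_pos (Real.exp_pos _)]
  unfold stmtG
  ring

theorem sum_eq_integral (τ s : ℝ) {ε : ℝ} (hε : 0 < ε)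
    (hInt : Integrable (fun x => stmtG τ s (ε * ⌊x / ε⌋))) :
    (∑' n : ℤ, ε * Real.exp (2 * (n : ℝ) * ε) /
        (Real.exp (2 * (n : ℝ) * ε) - 2 * τ * s⁻¹ * Real.exp ((n : ℝ) * ε) + (s⁻¹) ^ 2) ^ 2)
      = ∫ x, stmtG τ s (ε * ⌊x / ε⌋) := by
  have hm : ∀ n : ℤ, MeasurableSet (Set.Ico (ε * (n : ℝ)) (ε * ((n : ℝ) + 1))) :=
    fun n => measurableSet_Ico
  have hd : Pairwise (Function.onFun Disjoint
      fun n : ℤ => Set.Ico (ε * (n : ℝ)) (ε * ((n : ℝ) + 1))) := by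
    intro m n hmn
    rw [Function.onFun, Set.Ico_disjoint_Ico]
    rcases hmn.lt_or_gt with h | h
    · have hcast : (m : ℝ) + 1 ≤ n := by exact_mod_cast h
      calc min (ε * ((m : ℝ) + 1)) (ε * ((n : ℝ) + 1)) ≤ ε * ((m : ℝ) + 1) := min_le_left _ _
        _ ≤ ε * (n : ℝ) := by nlinarith
        _ ≤ max (ε * (m : ℝ)) (ε * (n : ℝ)) := le_max_right _ _
    · have hcast : (n : ℝ) + 1 ≤ m := by exact_mod_cast h
      calc min (ε * ((m : ℝ) + 1)) (ε * ((n : ℝ) + 1)) ≤ ε * ((n : ℝ) + 1) := min_le_right _ _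
        _ ≤ ε * (m : ℝ) := by nlinarith
        _ ≤ max (ε * (m : ℝ)) (ε * (n : ℝ)) := le_max_left _ _
  have hU : (⋃ n : ℤ, Set.Ico (ε * (n : ℝ)) (ε * ((n : ℝ) + 1))) = Set.univ := by
    ext x
    simp only [Set.mem_iUnion, Set.mem_univ, iff_true, Set.mem_Ico]
    refine ⟨⌊x / ε⌋, ?_, ?_⟩
    · calc ε * (⌊x / ε⌋ : ℝ) ≤ ε * (x / ε) :=
            mul_le_mul_of_nonneg_left (Int.floor_le _) hε.le
        _ = x := by field_simp
    · calc x = ε * (x / ε) := by field_simp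
        _ < ε * ((⌊x / ε⌋ : ℝ) + 1) :=
            (mul_lt_mul_iff_right₀ hε).mpr (Int.lt_floor_add_one _)
  rw [show (∫ x, stmtG τ s (ε * ⌊x / ε⌋))
      = ∫ x in ⋃ n : ℤ, Set.Ico (ε * (n : ℝ)) (ε * ((n : ℝ) + 1)), stmtG τ s (ε * ⌊x / ε⌋) by
    rw [hU, setIntegral_univ]]
  rw [integral_iUnion hm hd (by rw [hU]; exact hInt.integrableOn)]
  apply tsum_congr; intro n
  have hflr : ∀ x ∈ Set.Ico (ε * (n : ℝ)) (ε * ((n : ℝ) + 1)),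
      stmtG τ s (ε * ⌊x / ε⌋) = stmtG τ s (ε * (n : ℝ)) := by
    intro x hx
    have hfl : ⌊x / ε⌋ = n := by
      rw [Int.floor_eq_iff]
      constructor
      · rw [le_div_iff₀ hε]; calc (n:ℝ) * ε = ε * n := by ring
          _ ≤ x := hx.1
      · rw [div_lt_iff₀ hε]; calc x < ε * ((n:ℝ)+1) := hx.2
          _ = ((n:ℝ)+1) * ε := by ring
    rw [hfl]
  rw [setIntegral_congr_fun (hm n) hflr, setIntegral_const,
    Real.volume_real_Ico_of_le (by nlinarith : ε * (n : ℝ) ≤ ε * ((n : ℝ) + 1)), smul_eq_mul]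
  have h3 : Real.exp ((n : ℝ) * ε) ^ 2 = Real.exp (2 * (n : ℝ) * ε) := by
    rw [← Real.exp_nat_mul]; ring_nf
  unfold stmtG stmtQ
  rw [show ε * (n : ℝ) = (n : ℝ) * ε by ring, ← h3]
  ring

/-- The Riemann sums `S(ε) = Σ_{n∈ℤ} ε e^{2nε}/(e^{2nε} - 2τ s⁻¹ e^{nε} + s⁻²)²` converge,
as `ε → 0⁺`, to the finite integral `∫_0^∞ r/(r² - 2τ s⁻¹ r + s⁻²)² dr`. -/
theorem stmt_7 (τ s : ℝ) (hτ : τ ∈ Set.Ico (-1 : ℝ) 1) (hs : s ∈ Set.Icc (1/2 : ℝ) 2) :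
    Tendsto
      (fun ε : ℝ => ∑' n : ℤ,
        ε * Real.exp (2 * (n : ℝ) * ε) /
          (Real.exp (2 * (n : ℝ) * ε) - 2 * τ * s⁻¹ * Real.exp ((n : ℝ) * ε) + (s⁻¹) ^ 2) ^ 2)
      (nhdsWithin 0 (Set.Ioi 0))
      (nhds (∫ r in Set.Ioi (0 : ℝ),
        r / (r ^ 2 - 2 * τ * s⁻¹ * r + (s⁻¹) ^ 2) ^ 2)) := by
  obtain ⟨hτ1, hτ2⟩ := hτ
  obtain ⟨hs1, hs2⟩ := hs
  set c : ℝ := min (1 - τ) 1 / 4 with hc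
  have hc0 : 0 < c := div_pos (lt_min (by linarith) one_pos) (by norm_num)
  have hqpos : ∀ x : ℝ, 0 < stmtQ τ s (Real.exp x) := fun x =>
    lt_of_lt_of_le (by positivity) (quad_lower τ s hτ1 hτ2 hs1 hs2 (Real.exp_pos x).le)
  have hgc : Continuous (stmtG τ s) := g_cont τ s hqpos
  set F : ℝ → ℝ → ℝ := fun ε x => stmtG τ s (ε * ⌊x / ε⌋) with hF
  set bound : ℝ → ℝ := fun x => c⁻¹ ^ 2 * Real.exp 2 * (1 / (1 + x ^ 2)) with hbd
  have hbint : Integrable bound := by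
    simp only [hbd, one_div]
    exact integrable_inv_one_add_sq.const_mul _
  have hmeas : ∀ ε : ℝ, AEStronglyMeasurable (F ε) volume := by
    intro ε
    have h1 : Measurable fun x : ℝ => ⌊x / ε⌋ :=
      Int.measurable_floor.comp (measurable_id.div_const ε)
    exact ((measurable_from_top (f := fun n : ℤ => stmtG τ s (ε * n))).comp
      h1).aestronglyMeasurable
  have hFb : ∀ ε ∈ Set.Ioc (0:ℝ) 1, ∀ x : ℝ, ‖F ε x‖ ≤ bound x := by
    intro ε hε x
    have hε0 : (0:ℝ) < ε := hε.1
    rw [show F ε x = stmtG τ s (ε * ⌊x / ε⌋) from rfl, Real.norm_eq_abs,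
      abs_of_nonneg (g_nonneg τ s _)]
    set y : ℝ := ε * (⌊x / ε⌋ : ℝ) with hy
    have hyx1 : y ≤ x := by
      calc ε * (⌊x/ε⌋:ℝ) ≤ ε * (x/ε) := mul_le_mul_of_nonneg_left (Int.floor_le _) hε0.le
        _ = x := by field_simp
    have hyx2 : x - 1 ≤ y := by
      have hlt : x < y + ε := by
        calc x = ε * (x/ε) := by field_simp
          _ < ε * ((⌊x/ε⌋:ℝ)+1) := (mul_lt_mul_iff_right₀ hε0).mpr (Int.lt_floor_add_one _)
          _ = y + ε := by ring
      linarith [hε.2]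
    have habs : |x| - 1 ≤ |y| := by
      have h1 : |x - y| ≤ 1 := by rw [abs_of_nonneg (by linarith)]; linarith
      linarith [abs_sub_abs_le_abs_sub x y]
    calc stmtG τ s y ≤ c⁻¹ ^ 2 * Real.exp (-(2*|y|)) := g_bound τ s hτ1 hτ2 hs1 hs2 y
      _ ≤ c⁻¹ ^ 2 * (Real.exp 2 * Real.exp (-(2*|x|))) := by
          rw [← Real.exp_add]
          exact mul_le_mul_of_nonneg_left (Real.exp_le_exp.mpr (by linarith)) (by positivity)
      _ ≤ c⁻¹ ^ 2 * (Real.exp 2 * (1/(1+x^2))) := by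
          refine mul_le_mul_of_nonneg_left ?_ (by positivity)
          exact mul_le_mul_of_nonneg_left (exp_abs_bound x) (Real.exp_pos 2).le
      _ = bound x := by rw [hbd]; ring
  have hInt : ∀ ε ∈ Set.Ioc (0:ℝ) 1, Integrable (F ε) :=
    fun ε hε => hbint.mono' (hmeas ε) (ae_of_all _ (hFb ε hε))
  have hIoc : Set.Ioc (0:ℝ) 1 ∈ nhdsWithin (0:ℝ) (Set.Ioi 0) :=
    Ioc_mem_nhdsGT_of_mem (by norm_num : (0:ℝ) ∈ Set.Ico (0:ℝ) 1)
  have hDCT : Tendsto (fun ε => ∫ x, F ε x) (nhdsWithin 0 (Set.Ioi 0))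
      (nhds (∫ x, stmtG τ s x)) := by
    apply tendsto_integral_filter_of_dominated_convergence bound
      (Eventually.of_forall fun ε => hmeas ε)
      (by filter_upwards [hIoc] with ε hε; exact ae_of_all _ (hFb ε hε))
      hbint
    refine ae_of_all _ fun x => ?_
    have hy : Tendsto (fun ε : ℝ => ε * (⌊x / ε⌋:ℝ)) (nhdsWithin 0 (Set.Ioi 0)) (nhds x) := by
      have hlow : Tendsto (fun ε : ℝ => x - ε) (nhdsWithin 0 (Set.Ioi 0)) (nhds x) := by
        have h := (tendsto_const_nhds (x := x) (f := nhds (0:ℝ))).sub tendsto_id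
        rw [sub_zero] at h
        exact h.mono_left nhdsWithin_le_nhds
      refine tendsto_of_tendsto_of_tendsto_of_le_of_le' hlow tendsto_const_nhds ?_ ?_
      · filter_upwards [self_mem_nhdsWithin] with ε hε
        have hε0 : (0:ℝ) < ε := hε
        have hlt : x < ε * (⌊x/ε⌋:ℝ) + ε := by
          calc x = ε * (x/ε) := by field_simp
            _ < ε * ((⌊x/ε⌋:ℝ)+1) := (mul_lt_mul_iff_right₀ hε0).mpr (Int.lt_floor_add_one _)
            _ = ε * (⌊x/ε⌋:ℝ) + ε := by ring
        linarith
      · filter_upwards [self_mem_nhdsWithin] with ε hε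
        have hε0 : (0:ℝ) < ε := hε
        calc ε * (⌊x/ε⌋:ℝ) ≤ ε * (x/ε) := mul_le_mul_of_nonneg_left (Int.floor_le _) hε0.le
          _ = x := by field_simp
    exact ((hgc.tendsto x).comp hy : _)
  rw [integral_subst τ s]
  refine Tendsto.congr' ?_ hDCT
  filter_upwards [hIoc] with ε hε
  exact (sum_eq_integral τ s hε.1 (hInt ε hε)).symm
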